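/- Let H be a real Hilbert space, H₀ a finite-dimensional subspace of dimension n with orthonormal basis e₁,...,e_n, and T a norm-one bounded linear operator on H with M_T = S_{H₀}. Then the span of the functionals {x ⊗ Tx : x ∈ S_{H₀}}, where (x ⊗ Tx)(S) = ⟨Sx, Tx⟩, equals the span of {e_i ⊗ Te_j + e_j ⊗ Te_i : 1 ≤ i ≤ j ≤ n}, and hence has dimension at most n(n+1)/2. -/

import Mathlib

/-- The functional `x ⊗ Ty` on bounded operators, `S ↦ ⟨Sx, Ty⟩`. -/
noncomputable def tensorFun {H : Type*} [NormedAddCommGroup H] [InnerProductSpace ℝ H]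
    (T : H →L[ℝ] H) (x y : H) : (H →L[ℝ] H) →ₗ[ℝ] ℝ where
  toFun S := (inner ℝ (S x) (T y) : ℝ)
  map_add' S₁ S₂ := by simp [inner_add_left]
  map_smul' c S := by simp [inner_smul_left]

lemma tensorFun_apply {H : Type*} [NormedAddCommGroup H] [InnerProductSpace ℝ H]
    (T : H →L[ℝ] H) (x y : H) (S : H →L[ℝ] H) :
    tensorFun T x y S = (inner ℝ (S x) (T y) : ℝ) := rfl

lemma tensorFun_sum {H : Type*} [NormedAddCommGroup H] [InnerProductSpace ℝ H]
    (T : H →L[ℝ] H) {n : ℕ} (c : Fin n → ℝ) (e : Fin n → H) :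
    tensorFun T (∑ i, c i • e i) (∑ i, c i • e i) =
      ∑ i, ∑ j, (c i * c j) • tensorFun T (e i) (e j) := by
  ext S
  simp only [tensorFun_apply, LinearMap.coe_sum, Finset.sum_apply, LinearMap.smul_apply,
    map_sum, map_smul, inner_sum, sum_inner, inner_smul_left, inner_smul_right, smul_eq_mul,
    RCLike.conj_to_real]
  simp only [Finset.mul_sum]
  rw [Finset.sum_comm]
  refine Finset.sum_congr rfl fun i _ => Finset.sum_congr rfl fun j _ => by ring

lemma tensorFun_smul_add {H : Type*} [NormedAddCommGroup H] [InnerProductSpace ℝ H]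
    (T : H →L[ℝ] H) (a : ℝ) (x y : H) :
    tensorFun T (a • (x + y)) (a • (x + y)) =
      (a * a) • (tensorFun T x x + tensorFun T x y + tensorFun T y x + tensorFun T y y) := by
  ext S
  simp only [tensorFun_apply, map_smul, map_add, inner_smul_left, inner_smul_right,
    inner_add_left, inner_add_right, LinearMap.smul_apply, LinearMap.add_apply, smul_eq_mul,
    RCLike.conj_to_real]
  ring

lemma sym_sum {M : Type*} [AddCommGroup M] [Module ℝ M] {n : ℕ} (c : Fin n → ℝ)
    (g : Fin n → Fin n → M) :
    ∑ i, ∑ j, (c i * c j) • g i j = ∑ i, ∑ j, ((c i * c j) / 2) • (g i j + g j i) := by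
  have h1 : ∑ i, ∑ j, ((c i * c j) / 2) • (g i j + g j i)
      = ∑ i, ∑ j, ((c i * c j) / 2) • g i j + ∑ i, ∑ j, ((c i * c j) / 2) • g j i := by
    simp [smul_add, Finset.sum_add_distrib]
  have h2 : ∑ i, ∑ j, ((c i * c j) / 2) • g j i
      = ∑ i, ∑ j, ((c j * c i) / 2) • g i j := by
    rw [Finset.sum_comm]
  rw [h1, h2]
  simp only [← Finset.sum_add_distrib, ← add_smul]
  refine Finset.sum_congr rfl fun i _ => Finset.sum_congr rfl fun j _ => by
    rw [show c i * c j / 2 + c j * c i / 2 = c i * c j by ring]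

/-- For a norm-one operator `T` on a real Hilbert space with `M_T = S_{H₀}`, `H₀`
having orthonormal basis `e₁,…,e_n`, the span of `{x ⊗ Tx : x ∈ S_{H₀}}` equals the
span of `{eᵢ ⊗ Teⱼ + eⱼ ⊗ Teᵢ : i ≤ j}`, so its dimension is at most `n(n+1)/2`. -/
theorem stmt5 {H : Type*} [NormedAddCommGroup H] [InnerProductSpace ℝ H] [CompleteSpace H]
    (T : H →L[ℝ] H) (hT : ‖T‖ = 1)
    (H₀ : Submodule ℝ H) [FiniteDimensional ℝ H₀] {n : ℕ}
    (hdim : Module.finrank ℝ H₀ = n)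
    (e : Fin n → H) (he : Orthonormal ℝ e) (hemem : ∀ i, e i ∈ H₀)
    (hespan : Submodule.span ℝ (Set.range e) = H₀)
    (hMT : {x : H | ‖x‖ = 1 ∧ ‖T x‖ = 1} = {x : H | x ∈ H₀ ∧ ‖x‖ = 1}) :
    Submodule.span ℝ {f : (H →L[ℝ] H) →ₗ[ℝ] ℝ |
        ∃ x : H, x ∈ H₀ ∧ ‖x‖ = 1 ∧ f = tensorFun T x x} =
      Submodule.span ℝ {f : (H →L[ℝ] H) →ₗ[ℝ] ℝ |
        ∃ i j : Fin n, i ≤ j ∧ f = tensorFun T (e i) (e j) + tensorFun T (e j) (e i)} ∧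
    Module.finrank ℝ ↥(Submodule.span ℝ {f : (H →L[ℝ] H) →ₗ[ℝ] ℝ |
        ∃ x : H, x ∈ H₀ ∧ ‖x‖ = 1 ∧ f = tensorFun T x x}) ≤ n * (n + 1) / 2 := by
  classical
  set Lset : Set ((H →L[ℝ] H) →ₗ[ℝ] ℝ) :=
    {f | ∃ x : H, x ∈ H₀ ∧ ‖x‖ = 1 ∧ f = tensorFun T x x} with hLset
  set Rset : Set ((H →L[ℝ] H) →ₗ[ℝ] ℝ) :=
    {f | ∃ i j : Fin n, i ≤ j ∧ f = tensorFun T (e i) (e j) + tensorFun T (e j) (e i)} with hRset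
  have hgen : ∀ i j : Fin n,
      tensorFun T (e i) (e j) + tensorFun T (e j) (e i) ∈ Submodule.span ℝ Rset := by
    intro i j
    rcases le_total i j with h | h
    · exact Submodule.subset_span ⟨i, j, h, rfl⟩
    · rw [add_comm]
      exact Submodule.subset_span ⟨j, i, h, rfl⟩
  have hdiag : ∀ k, tensorFun T (e k) (e k) ∈ Submodule.span ℝ Lset := fun k =>
    Submodule.subset_span ⟨e k, hemem k, he.1 k, rfl⟩
  have hmain : Submodule.span ℝ Lset = Submodule.span ℝ Rset := by
    apply le_antisymm
    · rw [Submodule.span_le]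
      rintro f ⟨x, hx, hx1, rfl⟩
      rw [← hespan] at hx
      obtain ⟨c, hc⟩ := (Submodule.mem_span_range_iff_exists_fun ℝ).mp hx
      rw [← hc, tensorFun_sum, sym_sum c (fun i j => tensorFun T (e i) (e j))]
      exact Submodule.sum_mem _ fun i _ => Submodule.sum_mem _ fun j _ =>
        Submodule.smul_mem _ _ (hgen i j)
    · rw [Submodule.span_le]
      rintro f ⟨i, j, hij, rfl⟩
      by_cases hij' : i = j
      · subst hij'
        rw [← two_smul ℝ]
        exact Submodule.smul_mem _ _ (hdiag i)
      · set a : ℝ := (Real.sqrt 2)⁻¹ with ha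
        set u : H := a • (e i + e j) with hu
        have hinner : (inner ℝ (e i) (e j) : ℝ) = 0 := he.2 hij'
        have hinner' : (inner ℝ (e j) (e i) : ℝ) = 0 := he.2 (Ne.symm hij')
        have hsq : ‖e i + e j‖ ^ 2 = 2 := by
          rw [← real_inner_self_eq_norm_sq, inner_add_add_self, hinner, hinner',
            real_inner_self_eq_norm_sq, real_inner_self_eq_norm_sq, he.1 i, he.1 j]
          ring
        have hnadd : ‖e i + e j‖ = Real.sqrt 2 := by
          rw [← hsq, Real.sqrt_sq (norm_nonneg _)]
        have hu1 : ‖u‖ = 1 := by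
          rw [hu, norm_smul, Real.norm_eq_abs, ha, abs_inv,
            abs_of_nonneg (Real.sqrt_nonneg 2), hnadd,
            inv_mul_cancel₀ (by positivity : Real.sqrt 2 ≠ 0)]
        have humem : u ∈ H₀ := Submodule.smul_mem _ _ (add_mem (hemem i) (hemem j))
        have haa : a * a = 1 / 2 := by
          rw [ha, ← mul_inv, Real.mul_self_sqrt (by norm_num : (2:ℝ) ≥ 0)]
          norm_num
        have hexp : tensorFun T u u = (1/2 : ℝ) •
            (tensorFun T (e i) (e i) + tensorFun T (e i) (e j)
              + tensorFun T (e j) (e i) + tensorFun T (e j) (e j)) := by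
          rw [hu, tensorFun_smul_add, haa]
        have key : tensorFun T (e i) (e j) + tensorFun T (e j) (e i)
            = (2 : ℝ) • tensorFun T u u - tensorFun T (e i) (e i)
              - tensorFun T (e j) (e j) := by
          rw [hexp]
          module
        rw [key]
        exact sub_mem (sub_mem (Submodule.smul_mem _ _
          (Submodule.subset_span ⟨u, humem, hu1, rfl⟩)) (hdiag i)) (hdiag j)
  refine ⟨hmain, ?_⟩
  rw [hmain]
  set G : Sym2 (Fin n) → ((H →L[ℝ] H) →ₗ[ℝ] ℝ) :=
    Sym2.lift ⟨fun i j => tensorFun T (e i) (e j) + tensorFun T (e j) (e i),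
      fun i j => add_comm _ _⟩ with hG
  have hsub : Rset ⊆ Set.range G := by
    rintro f ⟨i, j, hij, rfl⟩
    exact ⟨s(i, j), by simp [hG]⟩
  have hfd : FiniteDimensional ℝ (Submodule.span ℝ (Set.range G)) :=
    FiniteDimensional.span_of_finite ℝ (Set.finite_range G)
  calc Module.finrank ℝ (Submodule.span ℝ Rset)
      ≤ Module.finrank ℝ (Submodule.span ℝ (Set.range G)) :=
        Submodule.finrank_mono (Submodule.span_mono hsub)
    _ ≤ Fintype.card (Sym2 (Fin n)) := finrank_range_le_card G
    _ = n * (n + 1) / 2 := by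
        rw [Sym2.card, Fintype.card_fin, Nat.choose_two_right]
        simp [Nat.mul_comm]
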